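/- arXiv:1907.13602 — 7 statements merged into one kernel-verified Lean document; each statement's English description precedes it below -/
import Mathlib

section
/- If a set {s₁,…,s_r} ⊆ {±1}ⁿ of sign vectors is Schur independent, then it is linearly independent. -/
/-- A family of sign vectors is Schur independent when the all-ones vector together
with the pairwise Schur (componentwise) products `s i ⊙ s j` for `i < j` is linearly
independent. -/
def SchurIndep {n r : ℕ} (s : Fin r → (Fin n → ℝ)) : Prop :=
  LinearIndependent ℝ (fun p : Option {p : Fin r × Fin r // p.1 < p.2} =>
    p.elim (fun _ => (1 : ℝ)) (fun q => s q.1.1 * s q.1.2))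

open Finset

lemma sq_sum_aux' {r : ℕ} (x : Fin r → ℝ) :
    (∑ i, x i) ^ 2 = ∑ i, x i ^ 2 +
      2 * ∑ p ∈ univ.filter (fun p : Fin r × Fin r => p.1 < p.2), x p.1 * x p.2 := by
  have h : (∑ i, x i) ^ 2 = ∑ p : Fin r × Fin r, x p.1 * x p.2 := by
    rw [sq, Finset.sum_mul_sum, ← Finset.sum_product']
    rfl
  rw [h, ← Finset.sum_filter_add_sum_filter_not univ (fun p : Fin r × Fin r => p.1 < p.2)]
  have h2 : ∑ p ∈ univ.filter (fun p : Fin r × Fin r => ¬ p.1 < p.2), x p.1 * x p.2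
      = ∑ i, x i ^ 2 + ∑ p ∈ univ.filter (fun p : Fin r × Fin r => p.1 < p.2), x p.1 * x p.2 := by
    rw [← Finset.sum_filter_add_sum_filter_not _ (fun p : Fin r × Fin r => p.1 = p.2)]
    congr 1
    · rw [Finset.sum_bij (fun (i : Fin r) _ => ((i, i) : Fin r × Fin r))]
      · intro i _; simp
      · intro a _ b _ hab; simpa using congrArg Prod.fst hab
      · rintro ⟨a, b⟩ hp; simp at hp; exact ⟨a, by simp, by simp [hp.2]⟩
      · intro i _; rw [sq]
    · rw [Finset.sum_bij (fun (p : Fin r × Fin r) _ => (p.2, p.1))]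
      · rintro ⟨a,b⟩ hp; simp at hp ⊢; omega
      · rintro ⟨a,b⟩ _ ⟨c,d⟩ _ hab; simp at hab; simp [hab]
      · rintro ⟨a,b⟩ hp; exact ⟨(b,a), by simp at hp ⊢; omega, rfl⟩
      · intro p _; ring
  rw [h2]; ring

/-- A Schur independent family of sign vectors is linearly independent. -/
theorem schurIndep_linearIndependent {n r : ℕ} (s : Fin r → Fin n → ℝ)
    (hs : ∀ i k, s i k = 1 ∨ s i k = -1) (h : SchurIndep s) :
    LinearIndependent ℝ s := by
  rw [SchurIndep, Fintype.linearIndependent_iff] at h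
  rw [Fintype.linearIndependent_iff]
  intro g hg i
  set f : Option {p : Fin r × Fin r // p.1 < p.2} → ℝ :=
    fun o => o.elim (∑ j, g j ^ 2) (fun q => 2 * (g q.1.1 * g q.1.2)) with hf
  have key : ∀ o, f o = 0 := by
    apply h
    funext k
    have hk : ∑ j, g j * s j k = 0 := by
      have := congrFun hg k
      simpa [Finset.sum_apply] using this
    have hsq : (∑ j, g j * s j k) ^ 2 = 0 := by rw [hk]; ring
    rw [sq_sum_aux'] at hsq
    have hd : ∀ j, (g j * s j k) ^ 2 = g j ^ 2 := by
      intro j; rcases hs j k with h1 | h1 <;> rw [h1] <;> ring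
    rw [Finset.sum_congr rfl (fun j _ => hd j)] at hsq
    rw [Fintype.sum_option]
    simp only [Pi.add_apply, Finset.sum_apply, Pi.smul_apply, Pi.zero_apply, Option.elim,
      smul_eq_mul, Pi.mul_apply, Pi.one_apply, hf]
    have hsub : ∑ q : {p : Fin r × Fin r // p.1 < p.2},
        2 * (g q.1.1 * g q.1.2) * (s q.1.1 k * s q.1.2 k)
        = ∑ p ∈ univ.filter (fun p : Fin r × Fin r => p.1 < p.2),
            2 * (g p.1 * g p.2) * (s p.1 k * s p.2 k) :=
      Eq.symm <| Finset.sum_subtype (p := fun p : Fin r × Fin r => p.1 < p.2)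
        (univ.filter (fun p : Fin r × Fin r => p.1 < p.2)) (fun x => by simp)
        (fun p : Fin r × Fin r => 2 * (g p.1 * g p.2) * (s p.1 k * s p.2 k))
    rw [hsub]
    rw [Finset.mul_sum] at hsq
    rw [show ∑ p ∈ univ.filter (fun p : Fin r × Fin r => p.1 < p.2),
          2 * (g p.1 * g p.2) * (s p.1 k * s p.2 k)
        = ∑ p ∈ univ.filter (fun p : Fin r × Fin r => p.1 < p.2),
          2 * (g p.1 * s p.1 k * (g p.2 * s p.2 k)) from
      Finset.sum_congr rfl (fun p _ => by ring)]
    linarith [hsq]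
  have h0 : ∑ j, g j ^ 2 = 0 := key none
  have := (Finset.sum_eq_zero_iff_of_nonneg (fun j _ => sq_nonneg (g j))).mp h0 i (mem_univ i)
  exact pow_eq_zero_iff (by norm_num) |>.mp this
end

section
/- Let S ∈ {±1}^{n×r} be a Schur independent sign matrix and Q ∈ R^{r×r} an invertible matrix. Then SQ is a sign matrix (all entries ±1) if and only if Q is a signed permutation matrix. -/
open Matrix

/-- A signed permutation matrix: `Q i j = ξ i` when `j = π i` and `0` otherwise,
for a permutation `π` and signs `ξ i ∈ {±1}`. -/
def IsSignedPermMatrix {r : ℕ} (Q : Matrix (Fin r) (Fin r) ℝ) : Prop :=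
  ∃ (π : Equiv.Perm (Fin r)) (ξ : Fin r → ℝ), (∀ i, ξ i = 1 ∨ ξ i = -1) ∧
    ∀ i j, Q i j = if j = π i then ξ i else 0

lemma sq_sum_expand {r : ℕ} (a x : Fin r → ℝ) (hx : ∀ k, x k * x k = 1) :
    (∑ k, a k * x k) ^ 2 = (∑ k, a k ^ 2) +
      ∑ p ∈ Finset.univ.filter (fun p : Fin r × Fin r => p.1 < p.2),
        2 * (a p.1 * a p.2) * (x p.1 * x p.2) := by
  classical
  set f : Fin r × Fin r → ℝ := fun p => (a p.1 * x p.1) * (a p.2 * x p.2) with hf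
  have h1 : (∑ k, a k * x k) ^ 2 = ∑ p : Fin r × Fin r, f p := by
    rw [sq, Finset.sum_mul_sum, ← Finset.sum_product', Finset.univ_product_univ]
  have hsplit : ∑ p : Fin r × Fin r, f p
      = (∑ p ∈ Finset.univ.filter (fun p : Fin r × Fin r => p.1 < p.2), f p)
      + ((∑ p ∈ Finset.univ.filter (fun p : Fin r × Fin r => p.2 < p.1), f p)
      + (∑ p ∈ Finset.univ.filter (fun p : Fin r × Fin r => p.1 = p.2), f p)) := by
    rw [← Finset.sum_filter_add_sum_filter_not Finset.univ (fun p : Fin r × Fin r => p.1 < p.2) f]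
    congr 1
    rw [← Finset.sum_filter_add_sum_filter_not
      (Finset.univ.filter (fun p : Fin r × Fin r => ¬ p.1 < p.2))
      (fun p : Fin r × Fin r => p.2 < p.1) f, Finset.filter_filter, Finset.filter_filter]
    congr 2
    · ext p; simp only [Finset.mem_filter, Finset.mem_univ, true_and]
      constructor
      · rintro ⟨_, h⟩; exact h
      · intro h; exact ⟨fun h' => absurd h (lt_asymm h'), h⟩
    · ext p; simp only [Finset.mem_filter, Finset.mem_univ, true_and]
      constructor
      · rintro ⟨h1, h2⟩; exact le_antisymm (not_lt.mp h2) (not_lt.mp h1)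
      · intro h; exact ⟨fun h' => absurd h (ne_of_lt h'), fun h' => absurd h.symm (ne_of_lt h')⟩
  have hgt : ∑ p ∈ Finset.univ.filter (fun p : Fin r × Fin r => p.2 < p.1), f p
      = ∑ p ∈ Finset.univ.filter (fun p : Fin r × Fin r => p.1 < p.2), f p := by
    apply Finset.sum_nbij' (fun p => Prod.swap p) (fun p => Prod.swap p) <;>
      simp [hf, mul_comm, mul_left_comm]
  have hdiag : ∑ p ∈ Finset.univ.filter (fun p : Fin r × Fin r => p.1 = p.2), f p
      = ∑ k, a k ^ 2 := by
    rw [Finset.sum_filter, Fintype.sum_prod_type]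
    apply Finset.sum_congr rfl
    intro k _
    rw [Finset.sum_ite_eq Finset.univ k (fun j => f (k, j))]
    simp only [Finset.mem_univ, if_true, hf]
    have := hx k; nlinarith [hx k]
  rw [h1, hsplit, hgt, hdiag, ← add_assoc, ← Finset.sum_add_distrib, add_comm]
  congr 1
  apply Finset.sum_congr rfl
  intro p _
  simp only [hf]; ring

/-- For a Schur independent sign matrix `S` and invertible `Q`,
`SQ` is a sign matrix iff `Q` is a signed permutation matrix. -/
theorem signMatrix_mul_iff_signedPerm {n r : ℕ} (S : Matrix (Fin n) (Fin r) ℝ)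
    (hS : ∀ i j, S i j = 1 ∨ S i j = -1)
    (hSchur : SchurIndep (fun j i => S i j))
    (Q : Matrix (Fin r) (Fin r) ℝ) (hQ : IsUnit Q) :
    (∀ i j, (S * Q) i j = 1 ∨ (S * Q) i j = -1) ↔ IsSignedPermMatrix Q := by
  classical
  constructor
  · intro hSQ
    -- Step 1: column structure of Q
    have key : ∀ j, (∑ k, Q k j ^ 2) = 1 ∧
        ∀ k l, k < l → Q k j * Q l j = 0 := by
      intro j
      set c : Option {p : Fin r × Fin r // p.1 < p.2} → ℝ :=
        fun o => o.elim ((∑ k, Q k j ^ 2) - 1) (fun q => 2 * (Q q.1.1 j * Q q.1.2 j)) with hc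
      have hsum : ∑ o, c o • (fun p : Option {p : Fin r × Fin r // p.1 < p.2} =>
          p.elim (fun _ => (1 : ℝ)) (fun q => (fun j i => S i j) q.1.1 * (fun j i => S i j) q.1.2)) o = 0 := by
        funext i
        have hx : ∀ k, S i k * S i k = 1 := by
          intro k; rcases hS i k with h | h <;> rw [h] <;> norm_num
        have hval : ((S * Q) i j) ^ 2 = 1 := by
          rcases hSQ i j with h | h <;> rw [h] <;> norm_num
        have hexp : (∑ k, Q k j * S i k) ^ 2 = (∑ k, Q k j ^ 2) +
            ∑ p ∈ Finset.univ.filter (fun p : Fin r × Fin r => p.1 < p.2),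
              2 * (Q p.1 j * Q p.2 j) * (S i p.1 * S i p.2) :=
          sq_sum_expand (fun k => Q k j) (fun k => S i k) hx
        have hmul : (S * Q) i j = ∑ k, Q k j * S i k := by
          rw [Matrix.mul_apply]; exact Finset.sum_congr rfl fun k _ => mul_comm _ _
        rw [hmul] at hval
        rw [hexp] at hval
        simp only [Finset.sum_apply, Pi.smul_apply, smul_eq_mul, Pi.zero_apply]
        rw [Fintype.sum_option]
        simp only [Option.elim_none, Option.elim_some, Pi.mul_apply, hc]
        rw [mul_one, ← Finset.sum_subtype
          (Finset.univ.filter (fun p : Fin r × Fin r => p.1 < p.2))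
          (fun p => by simp)
          (fun p => 2 * (Q p.1 j * Q p.2 j) * (S i p.1 * S i p.2))]
        linarith [hval]
      have hz := Fintype.linearIndependent_iff.mp hSchur c hsum
      constructor
      · have h0 := hz none
        simp only [hc, Option.elim] at h0
        linarith
      · intro k l hkl
        have h1 := hz (some ⟨(k, l), hkl⟩)
        simp only [hc, Option.elim] at h1
        linarith
    have hzero : ∀ j k l, k ≠ l → Q k j * Q l j = 0 := by
      intro j k l hkl
      rcases lt_or_gt_of_ne hkl with h | h
      · exact (key j).2 k l h
      · rw [mul_comm]; exact (key j).2 l k h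
    have hex : ∀ j, ∃ k, Q k j ≠ 0 := by
      intro j
      by_contra h
      push_neg at h
      have : (∑ k, Q k j ^ 2) = 0 := Finset.sum_eq_zero fun k _ => by rw [h k]; ring
      rw [(key j).1] at this; norm_num at this
    choose kf hkf using hex
    have hcolzero : ∀ j l, l ≠ kf j → Q l j = 0 := by
      intro j l hl
      have := hzero j l (kf j) hl
      exact (mul_eq_zero.mp this).resolve_right (hkf j)
    have hsq1 : ∀ j, Q (kf j) j * Q (kf j) j = 1 := by
      intro j
      have h1 := (key j).1
      rw [Finset.sum_eq_single (kf j) (fun l _ hl => by rw [hcolzero j l hl]; ring)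
        (fun h => absurd (Finset.mem_univ _) h)] at h1
      nlinarith [h1]
    -- injectivity of kf
    have hinj : Function.Injective kf := by
      intro j1 j2 hj
      by_contra hne
      set k0 := kf j1 with hk0
      set v : Fin r → ℝ := Pi.single j1 (Q k0 j2) - Pi.single j2 (Q k0 j1) with hv
      have hQv : Q *ᵥ v = 0 := by
        funext i
        have : Q *ᵥ v = Q *ᵥ Pi.single j1 (Q k0 j2) - Q *ᵥ Pi.single j2 (Q k0 j1) := by
          rw [hv, Matrix.mulVec_sub]
        rw [this]
        simp only [Pi.sub_apply, Matrix.mulVec_single, Pi.zero_apply, Pi.smul_apply, Matrix.col_apply, op_smul_eq_mul]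
        by_cases hi : i = k0
        · subst hi; rw [hj]; ring
        · rw [hcolzero j1 i (by rw [← hk0]; exact hi),
            hcolzero j2 i (by rw [← hj]; exact hi)]
          ring
      have hv0 : v = 0 := by
        have hd : IsUnit Q.det := (Matrix.isUnit_iff_isUnit_det Q).mp hQ
        calc v = (Q⁻¹ * Q) *ᵥ v := by rw [Matrix.nonsing_inv_mul Q hd, Matrix.one_mulVec]
        _ = Q⁻¹ *ᵥ (Q *ᵥ v) := by rw [Matrix.mulVec_mulVec]
        _ = 0 := by rw [hQv, Matrix.mulVec_zero]
      have : v j1 = Q k0 j2 := by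
        rw [hv]
        simp [Pi.single_eq_same, Pi.single_eq_of_ne hne]
      rw [hv0] at this
      have hne2 : Q k0 j2 ≠ 0 := by rw [hj]; exact hkf j2
      exact hne2 this.symm
    have hbij : Function.Bijective kf := (Finite.injective_iff_bijective).mp hinj
    set κ := Equiv.ofBijective kf hbij with hκ
    refine ⟨κ.symm, fun i => Q i (κ.symm i), ?_, ?_⟩
    · intro i
      have : kf (κ.symm i) = i := κ.apply_symm_apply i
      have h1 := hsq1 (κ.symm i)
      rw [this] at h1
      exact mul_self_eq_one_iff.mp h1
    · intro i j
      by_cases hij : j = κ.symm i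
      · subst hij; simp
      · rw [if_neg hij]
        apply hcolzero j i
        intro hik
        apply hij
        have hkj : κ j = i := hik.symm
        rw [← hkj, Equiv.symm_apply_apply]
  · rintro ⟨π, ξ, hξ, hQd⟩ i j
    have : (S * Q) i j = S i (π.symm j) * ξ (π.symm j) := by
      rw [Matrix.mul_apply]
      have hcond : ∀ k : Fin r, (if j = π k then S i k * ξ k else 0)
          = (if k = π.symm j then S i k * ξ k else 0) := by
        intro k
        congr 1
        simp [eq_comm, Equiv.symm_apply_eq, Equiv.eq_symm_apply]
      calc ∑ k, S i k * Q k j = ∑ k, if k = π.symm j then S i k * ξ k else 0 := by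
            apply Finset.sum_congr rfl
            intro k _
            rw [hQd k j, mul_ite, mul_zero, hcond k]
        _ = S i (π.symm j) * ξ (π.symm j) := by
            rw [Finset.sum_ite_eq' Finset.univ (π.symm j) (fun k => S i k * ξ k)]
            simp
    rw [this]
    rcases hS i (π.symm j) with h1 | h1 <;> rcases hξ (π.symm j) with h2 | h2 <;>
      rw [h1, h2] <;> norm_num
end

section
/- Let B = S Wᵀ where S ∈ {±1}^{n×r} is Schur independent and W ∈ R^{m×r} has full column rank. If B = S̃ W̃ᵀ is another decomposition with S̃ ∈ {±1}^{n×r} and W̃ ∈ R^{m×r}, then there exists a signed permutation matrix Π ∈ R^{r×r} with S̃ = S Π and W̃ = W Π. -/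
open Matrix

private lemma sq_sum_split {r : ℕ} (a : Fin r → ℝ) :
    (∑ j, a j) ^ 2 =
      (∑ j, a j ^ 2) + ∑ p : {p : Fin r × Fin r // p.1 < p.2}, 2 * (a p.1.1 * a p.1.2) := by
  classical
  have h1 : (∑ j, a j) ^ 2 = ∑ p : Fin r × Fin r, a p.1 * a p.2 := by
    rw [sq, Finset.sum_mul_sum, ← Finset.univ_product_univ, Finset.sum_product]
  have hsub : ∑ p : {p : Fin r × Fin r // p.1 < p.2}, 2 * (a p.1.1 * a p.1.2)
      = ∑ p ∈ Finset.univ.filter (fun p : Fin r × Fin r => p.1 < p.2),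
          2 * (a p.1 * a p.2) :=
    (Finset.sum_subtype (Finset.univ.filter fun p : Fin r × Fin r => p.1 < p.2)
      (fun x => by simp) (fun p => 2 * (a p.1 * a p.2))).symm
  have hdiag : ∑ p ∈ Finset.univ.filter (fun p : Fin r × Fin r => p.1 = p.2),
      a p.1 * a p.2 = ∑ j, a j ^ 2 := by
    rw [Finset.sum_filter, ← Finset.univ_product_univ, Finset.sum_product]
    simp [sq]
  have hswap : ∑ p ∈ Finset.univ.filter (fun p : Fin r × Fin r => p.2 < p.1),
      a p.1 * a p.2
      = ∑ p ∈ Finset.univ.filter (fun p : Fin r × Fin r => p.1 < p.2),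
          a p.1 * a p.2 := by
    refine Finset.sum_nbij' (fun p => Prod.swap p) (fun p => Prod.swap p) ?_ ?_ ?_ ?_ ?_ <;>
      simp [mul_comm]
  have hsplit2 : ∑ p ∈ Finset.univ.filter (fun p : Fin r × Fin r => ¬ p.1 = p.2),
      a p.1 * a p.2
      = ∑ p ∈ Finset.univ.filter (fun p : Fin r × Fin r => p.1 < p.2), a p.1 * a p.2
        + ∑ p ∈ Finset.univ.filter (fun p : Fin r × Fin r => p.2 < p.1), a p.1 * a p.2 := by
    rw [← Finset.sum_filter_add_sum_filter_not
      (Finset.univ.filter (fun p : Fin r × Fin r => ¬ p.1 = p.2))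
      (fun p : Fin r × Fin r => p.1 < p.2)]
    congr 1
    · congr 1
      ext p
      simp only [Finset.mem_filter, Finset.mem_univ, true_and]
      constructor
      · exact fun h => h.2
      · exact fun h => ⟨ne_of_lt h, h⟩
    · congr 1
      ext p
      simp only [Finset.mem_filter, Finset.mem_univ, true_and]
      constructor
      · exact fun h => lt_of_le_of_ne (not_lt.mp h.2) (Ne.symm h.1)
      · exact fun h => ⟨(ne_of_lt h).symm, not_lt.mpr h.le⟩
  rw [h1, ← Finset.sum_filter_add_sum_filter_not Finset.univ
    (fun p : Fin r × Fin r => p.1 = p.2), hdiag, hsplit2, hswap, hsub, ← Finset.sum_add_distrib]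
  congr 1
  exact Finset.sum_congr rfl (fun p _ => by ring)

private lemma schur_coeffs {n r : ℕ} {s : Fin r → (Fin n → ℝ)}
    (hs1 : ∀ j i, s j i = 1 ∨ s j i = -1) (hSchur : SchurIndep s)
    (c : Fin r → ℝ) (t : ℝ) (hti : ∀ i, (∑ j, c j * s j i) ^ 2 = t) :
    (∑ j, c j ^ 2) = t ∧ ∀ p : Fin r × Fin r, p.1 < p.2 → c p.1 * c p.2 = 0 := by
  classical
  set g : Option {p : Fin r × Fin r // p.1 < p.2} → ℝ :=
    fun x => x.elim ((∑ j, c j ^ 2) - t) (fun q => 2 * (c q.1.1 * c q.1.2)) with hg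
  have hsum : ∑ x, g x • (fun p : Option {p : Fin r × Fin r // p.1 < p.2} =>
      p.elim (fun _ => (1 : ℝ)) (fun q => s q.1.1 * s q.1.2)) x = 0 := by
    funext i
    rw [Finset.sum_apply, Fintype.sum_option]
    have hkey : t = (∑ j, c j ^ 2)
        + ∑ p : {p : Fin r × Fin r // p.1 < p.2},
            2 * (c p.1.1 * c p.1.2) * (s p.1.1 i * s p.1.2 i) := by
      rw [← hti i, sq_sum_split (fun j => c j * s j i)]
      congr 1
      · apply Finset.sum_congr rfl
        intro j _
        rcases hs1 j i with h | h <;> rw [h] <;> ring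
      · apply Finset.sum_congr rfl
        intro p _
        ring
    simp only [hg, Option.elim, Pi.smul_apply, smul_eq_mul, Pi.zero_apply, Pi.mul_apply]
    have : ∑ x : {p : Fin r × Fin r // p.1 < p.2},
        2 * (c x.1.1 * c x.1.2) * (s x.1.1 i * s x.1.2 i)
        = t - ∑ j, c j ^ 2 := by rw [hkey]; ring
    calc ((∑ j, c j ^ 2) - t) * 1
          + ∑ x : {p : Fin r × Fin r // p.1 < p.2},
              2 * (c x.1.1 * c x.1.2) * (s x.1.1 i * s x.1.2 i)
        = ((∑ j, c j ^ 2) - t) * 1 + (t - ∑ j, c j ^ 2) := by rw [this]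
      _ = 0 := by ring
  have hz := Fintype.linearIndependent_iff.mp hSchur g hsum
  constructor
  · have := hz none
    simp only [hg, Option.elim] at this
    linarith
  · intro p hp
    have := hz (some ⟨p, hp⟩)
    simp only [hg, Option.elim] at this
    linarith

private lemma schur_linearIndependent {n r : ℕ} {s : Fin r → (Fin n → ℝ)}
    (hs1 : ∀ j i, s j i = 1 ∨ s j i = -1) (hSchur : SchurIndep s) :
    LinearIndependent ℝ s := by
  rw [Fintype.linearIndependent_iff]
  intro c hc
  have hti : ∀ i, (∑ j, c j * s j i) ^ 2 = 0 := by
    intro i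
    have := congrFun hc i
    simp only [Finset.sum_apply, Pi.smul_apply, smul_eq_mul, Pi.zero_apply] at this
    rw [this]; ring
  have h0 := (schur_coeffs hs1 hSchur c 0 hti).1
  intro j
  have hnn : ∀ j ∈ Finset.univ, (0:ℝ) ≤ c j ^ 2 := fun j _ => sq_nonneg _
  have := (Finset.sum_eq_zero_iff_of_nonneg hnn).mp h0 j (Finset.mem_univ j)
  exact pow_eq_zero_iff (two_ne_zero) |>.mp this

private lemma schur_span_sign {n r : ℕ} {s : Fin r → (Fin n → ℝ)}
    (hs1 : ∀ j i, s j i = 1 ∨ s j i = -1) (hSchur : SchurIndep s)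
    {t : Fin n → ℝ} (ht : ∀ i, t i = 1 ∨ t i = -1)
    (htspan : t ∈ Submodule.span ℝ (Set.range s)) :
    ∃ (k : Fin r) (ξ : ℝ), (ξ = 1 ∨ ξ = -1) ∧ t = ξ • s k := by
  classical
  obtain ⟨c, hc⟩ := (Submodule.mem_span_range_iff_exists_fun ℝ).mp htspan
  have hti : ∀ i, (∑ j, c j * s j i) ^ 2 = 1 := by
    intro i
    have : (∑ j, c j * s j i) = t i := by
      have := congrFun hc i
      simpa [Finset.sum_apply] using this
    rw [this]
    rcases ht i with h | h <;> rw [h] <;> ring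
  obtain ⟨hsq, hprod⟩ := schur_coeffs hs1 hSchur c 1 hti
  have hprod' : ∀ j k, j ≠ k → c j * c k = 0 := by
    intro j k hjk
    rcases lt_or_gt_of_ne hjk with h | h
    · exact hprod (j, k) h
    · have := hprod (k, j) h
      linarith [this, mul_comm (c k) (c j)]
  have hex : ∃ k, c k ≠ 0 := by
    by_contra h
    push_neg at h
    rw [Finset.sum_eq_zero (fun j _ => by rw [h j]; ring)] at hsq
    norm_num at hsq
  obtain ⟨k, hk⟩ := hex
  have hzero : ∀ j, j ≠ k → c j = 0 := by
    intro j hjk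
    have := hprod' j k hjk
    rcases mul_eq_zero.mp this with h | h
    · exact h
    · exact absurd h hk
  have hck : c k ^ 2 = 1 := by
    rw [← hsq, Finset.sum_eq_single k (fun j _ hj => by rw [hzero j hj]; ring)
      (fun h => absurd (Finset.mem_univ k) h)]
  refine ⟨k, c k, ?_, ?_⟩
  · rw [sq] at hck; exact mul_self_eq_one_iff.mp hck
  · rw [← hc, Finset.sum_eq_single k (fun j _ hj => by rw [hzero j hj, zero_smul])
      (fun h => absurd (Finset.mem_univ k) h)]

/-- Uniqueness, up to signed permutation, of a minimal sign component
decomposition with Schur independent sign component and full-column-rank weights. -/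
theorem sign_component_decomposition_uniqueness {n m r : ℕ}
    (S S' : Matrix (Fin n) (Fin r) ℝ) (W W' : Matrix (Fin m) (Fin r) ℝ)
    (hS : ∀ i j, S i j = 1 ∨ S i j = -1)
    (hSchur : SchurIndep (fun j i => S i j))
    (hW : W.rank = r)
    (hS' : ∀ i j, S' i j = 1 ∨ S' i j = -1)
    (hB : S * Wᵀ = S' * W'ᵀ) :
    ∃ P : Matrix (Fin r) (Fin r) ℝ,
      IsSignedPermMatrix P ∧ S' = S * P ∧ W' = W * P := by
  classical
  set s : Fin r → (Fin n → ℝ) := fun j i => S i j with hs_def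
  have hs1 : ∀ j i, s j i = 1 ∨ s j i = -1 := fun j i => hS i j
  have hscols : LinearIndependent ℝ s := schur_linearIndependent hs1 hSchur
  have hSt : Sᵀ = s := by funext j i; rfl
  -- Wᵀ.mulVecLin is surjective
  have hWt_top : LinearMap.range (Wᵀ.mulVecLin) = ⊤ := by
    apply Submodule.eq_top_of_finrank_eq
    have h1 : Module.finrank ℝ (LinearMap.range (Wᵀ.mulVecLin)) = Wᵀ.rank := rfl
    rw [h1, Matrix.rank_transpose, hW, Module.finrank_pi]
    simp
  -- ranges
  have hrange : LinearMap.range ((S * Wᵀ).mulVecLin) = LinearMap.range (S.mulVecLin) := by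
    rw [Matrix.mulVecLin_mul]
    exact LinearMap.range_comp_of_range_eq_top _ hWt_top
  have hle : LinearMap.range (S.mulVecLin) ≤ LinearMap.range (S'.mulVecLin) := by
    rw [← hrange, hB, Matrix.mulVecLin_mul]
    exact LinearMap.range_comp_le_range _ _
  have hfrS : Module.finrank ℝ (LinearMap.range (S.mulVecLin)) = r := by
    rw [Matrix.range_mulVecLin, (show S.col = s from funext fun j => funext fun i => rfl), finrank_span_eq_card hscols, Fintype.card_fin]
  have hfrS' : Module.finrank ℝ (LinearMap.range (S'.mulVecLin)) ≤ r := by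
    have h1 : Module.finrank ℝ (LinearMap.range (S'.mulVecLin)) = S'.rank := rfl
    rw [h1]
    exact Matrix.rank_le_width S'
  have heq : LinearMap.range (S.mulVecLin) = LinearMap.range (S'.mulVecLin) :=
    Submodule.eq_of_le_of_finrank_le hle (by rw [hfrS]; exact hfrS')
  -- each column of S' lies in the span of the columns of S
  have hcolmem : ∀ j, S'ᵀ j ∈ Submodule.span ℝ (Set.range s) := by
    intro j
    have h1 : S'ᵀ j ∈ LinearMap.range (S'.mulVecLin) := by
      refine ⟨Pi.single j 1, ?_⟩
      rw [Matrix.mulVecLin_apply, Matrix.mulVec_single]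
      funext i
      simp [Matrix.transpose_apply]
    rw [← heq, Matrix.range_mulVecLin, (show S.col = s from funext fun j => funext fun i => rfl)] at h1
    exact h1
  choose σ ξ hξ hcol using fun j =>
    schur_span_sign hs1 hSchur (fun i => hS' i j) (hcolmem j)
  have hcolT : ∀ j, S'ᵀ j = ξ j • s (σ j) := fun j => hcol j
  -- columns of S' are linearly independent
  have hS'li : LinearIndependent ℝ (fun j => S'ᵀ j) := by
    rw [linearIndependent_iff_card_eq_finrank_span]
    have : Set.finrank ℝ (Set.range fun j => S'ᵀ j)
        = Module.finrank ℝ (LinearMap.range (S'.mulVecLin)) := by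
      rw [Matrix.range_mulVecLin]
      rfl
    rw [Fintype.card_fin, this, ← heq, hfrS]
  -- σ is injective
  have hσinj : Function.Injective σ := by
    intro j k hjk
    by_contra hne
    have hsum : ∑ l, (if l = j then ξ k else if l = k then -(ξ j) else 0) • S'ᵀ l
        = 0 := by
      rw [Finset.sum_eq_add_of_mem j k (Finset.mem_univ j) (Finset.mem_univ k) hne
        (fun l _ hl => by rw [if_neg hl.1, if_neg hl.2, zero_smul])]
      rw [if_pos rfl, if_neg (Ne.symm hne), if_pos rfl, hcolT j, hcolT k, hjk]
      module
    have := Fintype.linearIndependent_iff.mp hS'li _ hsum j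
    simp only [if_pos rfl] at this
    rcases hξ k with h | h <;> rw [h] at this <;> norm_num at this
  have hσbij : Function.Bijective σ := Finite.injective_iff_bijective.mp hσinj
  set e : Equiv.Perm (Fin r) := Equiv.ofBijective σ hσbij with he
  set P : Matrix (Fin r) (Fin r) ℝ := Matrix.of fun i j => if i = σ j then ξ j else 0 with hP
  have hPentry : ∀ i j, P i j = if j = e.symm i then ξ (e.symm i) else 0 := by
    intro i j
    by_cases h : i = σ j
    · have h2 : j = e.symm i := by
        rw [h]; exact (Equiv.symm_apply_apply e j).symm
      show (if i = σ j then ξ j else 0) = _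
      rw [if_pos h, if_pos h2, ← h2]
    · have h2 : ¬ j = e.symm i := by
        intro hj
        apply h
        rw [hj]
        exact (Equiv.apply_symm_apply e i).symm
      show (if i = σ j then ξ j else 0) = _
      rw [if_neg h, if_neg h2]
  have hS'eq : S' = S * P := by
    ext a b
    rw [Matrix.mul_apply]
    have hterm : ∀ k, S a k * P k b = if k = σ b then S a k * ξ b else 0 := by
      intro k
      rw [hP]
      simp only [Matrix.of_apply]
      by_cases h : k = σ b
      · rw [if_pos h, if_pos h]
      · rw [if_neg h, if_neg h, mul_zero]
    simp_rw [hterm]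
    rw [Finset.sum_ite_eq' Finset.univ (σ b) (fun k => S a k * ξ b), if_pos (Finset.mem_univ _)]
    have hcb := congrFun (hcolT b) a
    simp only [Matrix.transpose_apply, Pi.smul_apply, smul_eq_mul, hs_def] at hcb
    rw [hcb]
    ring
  -- cancel S
  have hcancel : ∀ Z : Matrix (Fin r) (Fin m) ℝ, S * Z = 0 → Z = 0 := by
    intro Z hZ
    ext k c
    have h0 : ∑ j, (fun j => Z j c) j • s j = 0 := by
      funext i
      have := congrFun (congrFun hZ i) c
      rw [Matrix.mul_apply] at this
      simp only [Finset.sum_apply, Pi.smul_apply, smul_eq_mul, Pi.zero_apply,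
        Matrix.zero_apply] at this ⊢
      rw [← this]
      apply Finset.sum_congr rfl
      intro j _
      rw [hs_def]
      ring
    exact Fintype.linearIndependent_iff.mp hscols _ h0 k
  have hWt : Wᵀ = P * W'ᵀ := by
    have h1 : S * (Wᵀ - P * W'ᵀ) = 0 := by
      rw [Matrix.mul_sub, ← Matrix.mul_assoc, ← hS'eq, hB, sub_self]
    have := hcancel _ h1
    rwa [sub_eq_zero] at this
  have hW'eq : W' = W * P := by
    ext x y
    rw [Matrix.mul_apply]
    have hterm : ∀ k, W x k * P k y = if k = σ y then W x k * ξ y else 0 := by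
      intro k
      rw [hP]
      simp only [Matrix.of_apply]
      by_cases h : k = σ y
      · rw [if_pos h, if_pos h]
      · rw [if_neg h, if_neg h, mul_zero]
    simp_rw [hterm]
    rw [Finset.sum_ite_eq' Finset.univ (σ y) (fun k => W x k * ξ y), if_pos (Finset.mem_univ _)]
    have h2 : W x (σ y) = ξ y * W' x y := by
      have hwy := congrFun (congrFun hWt (σ y)) x
      rw [Matrix.mul_apply] at hwy
      have h3 : ∀ k, P (σ y) k * W'ᵀ k x = if k = y then ξ y * W' x y else 0 := by
        intro k
        rw [hP]
        simp only [Matrix.of_apply]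
        by_cases h : k = y
        · rw [if_pos (by rw [h]), if_pos h, h, Matrix.transpose_apply]
        · have hne : ¬ (σ y = σ k) := fun hc => h (hσinj hc.symm)
          rw [if_neg (fun hc => hne (by rw [hc])), if_neg h, zero_mul]
      rw [Matrix.transpose_apply] at hwy
      rw [hwy]
      simp_rw [h3]
      rw [Finset.sum_ite_eq' Finset.univ y (fun k => ξ y * W' x y), if_pos (Finset.mem_univ _)]
    rw [h2]
    rcases hξ y with h | h <;> rw [h] <;> ring
  refine ⟨P, ⟨e.symm, fun i => ξ (e.symm i), fun i => hξ _, hPentry⟩, hS'eq, hW'eq⟩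
end

section
/- A binary matrix Z ∈ {0,1}^{n×r} is Schur independent if and only if the sign matrix [F(Z), e] ∈ {±1}^{n×(r+1)} is Schur independent, where F(Z) = 2Z − E entrywise and e is the all-ones column. -/
/-- Schur independence of a family of binary vectors: the all-ones vector, the vectors
themselves, and their pairwise Schur products for `i < j` are linearly independent. -/
def BinSchurIndep {n r : ℕ} (z : Fin r → (Fin n → ℝ)) : Prop :=
  LinearIndependent ℝ (fun p : Option (Fin r ⊕ {p : Fin r × Fin r // p.1 < p.2}) =>
    p.elim (fun _ => (1 : ℝ)) (Sum.elim z (fun q => z q.1.1 * z q.1.2)))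


namespace BinSchurAux

abbrev P (r : ℕ) := {p : Fin r × Fin r // p.1 < p.2}

end BinSchurAux

open BinSchurAux in
private theorem binSchur_span_eq {n r : ℕ} (z : Fin r → Fin n → ℝ) :
    Submodule.span ℝ (Set.range (fun p : Option (Fin r ⊕ P r) =>
        p.elim (fun _ => (1 : ℝ)) (Sum.elim z (fun q => z q.1.1 * z q.1.2)))) =
    Submodule.span ℝ (Set.range (fun p : Option (P (r+1)) =>
        p.elim (fun _ => (1 : ℝ)) (fun q =>
          (Fin.snoc (fun i k => 2 * z i k - 1) (fun _ => (1 : ℝ)) : Fin (r+1) → Fin n → ℝ) q.1.1 *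
          (Fin.snoc (fun i k => 2 * z i k - 1) (fun _ => (1 : ℝ)) : Fin (r+1) → Fin n → ℝ) q.1.2))) := by
  set s : Fin (r+1) → Fin n → ℝ := Fin.snoc (fun i k => 2 * z i k - 1) (fun _ => (1 : ℝ)) with hs
  set binFam : Option (Fin r ⊕ P r) → Fin n → ℝ := fun p =>
    p.elim (fun _ => (1 : ℝ)) (Sum.elim z (fun q => z q.1.1 * z q.1.2)) with hbin
  set signFam : Option (P (r+1)) → Fin n → ℝ := fun p =>
    p.elim (fun _ => (1 : ℝ)) (fun q => s q.1.1 * s q.1.2) with hsign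
  apply le_antisymm <;> rw [Submodule.span_le] <;> rintro x ⟨p, rfl⟩
  · -- binFam p ∈ span signFam
    match p with
    | none =>
      exact Submodule.subset_span ⟨none, rfl⟩
    | some (Sum.inl i) =>
      have : binFam (some (Sum.inl i)) =
          (1/2 : ℝ) • signFam (some ⟨(i.castSucc, Fin.last r), Fin.castSucc_lt_last i⟩)
          + (1/2 : ℝ) • signFam none := by
        funext k
        simp [hbin, hsign, hs, Fin.snoc_castSucc, Fin.snoc_last]
        ring
      rw [this]
      exact Submodule.add_mem _
        (Submodule.smul_mem _ _ (Submodule.subset_span ⟨_, rfl⟩))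
        (Submodule.smul_mem _ _ (Submodule.subset_span ⟨_, rfl⟩))
    | some (Sum.inr ⟨(i, j), hij⟩) =>
      have : binFam (some (Sum.inr ⟨(i, j), hij⟩)) =
          (1/4 : ℝ) • signFam (some ⟨(i.castSucc, j.castSucc), by simpa using hij⟩)
          + (1/4 : ℝ) • signFam (some ⟨(i.castSucc, Fin.last r), Fin.castSucc_lt_last i⟩)
          + (1/4 : ℝ) • signFam (some ⟨(j.castSucc, Fin.last r), Fin.castSucc_lt_last j⟩)
          + (1/4 : ℝ) • signFam none := by
        funext k
        simp [hbin, hsign, hs, Fin.snoc_castSucc, Fin.snoc_last]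
        ring
      rw [this]
      exact Submodule.add_mem _ (Submodule.add_mem _ (Submodule.add_mem _
        (Submodule.smul_mem _ _ (Submodule.subset_span ⟨_, rfl⟩))
        (Submodule.smul_mem _ _ (Submodule.subset_span ⟨_, rfl⟩)))
        (Submodule.smul_mem _ _ (Submodule.subset_span ⟨_, rfl⟩)))
        (Submodule.smul_mem _ _ (Submodule.subset_span ⟨_, rfl⟩))
  · -- signFam p ∈ span binFam
    match p with
    | none =>
      exact Submodule.subset_span ⟨none, rfl⟩
    | some ⟨(i, j), hij⟩ =>
      rcases eq_or_ne j (Fin.last r) with hj | hj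
      · subst hj
        have hi : i ≠ Fin.last r := fun h => not_lt_of_ge (Fin.le_last _) (h ▸ hij)
        obtain ⟨i', rfl⟩ := Fin.exists_castSucc_eq.2 hi
        have : signFam (some ⟨(i'.castSucc, Fin.last r), hij⟩) =
            (2 : ℝ) • binFam (some (Sum.inl i')) + (-1 : ℝ) • binFam none := by
          funext k
          simp [hbin, hsign, hs, Fin.snoc_castSucc, Fin.snoc_last]
          ring
        rw [this]
        exact Submodule.add_mem _
          (Submodule.smul_mem _ _ (Submodule.subset_span ⟨_, rfl⟩))
          (Submodule.smul_mem _ _ (Submodule.subset_span ⟨_, rfl⟩))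
      · obtain ⟨j', rfl⟩ := Fin.exists_castSucc_eq.2 hj
        have hi : i ≠ Fin.last r := fun h => hj (le_antisymm (Fin.le_last _) (h ▸ hij.le))
        obtain ⟨i', rfl⟩ := Fin.exists_castSucc_eq.2 hi
        have hij' : i' < j' := by simpa using hij
        have : signFam (some ⟨(i'.castSucc, j'.castSucc), hij⟩) =
            (4 : ℝ) • binFam (some (Sum.inr ⟨(i', j'), hij'⟩))
            + (-2 : ℝ) • binFam (some (Sum.inl i'))
            + (-2 : ℝ) • binFam (some (Sum.inl j'))
            + (1 : ℝ) • binFam none := by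
          funext k
          simp [hbin, hsign, hs, Fin.snoc_castSucc, Fin.snoc_last]
          ring
        rw [this]
        exact Submodule.add_mem _ (Submodule.add_mem _ (Submodule.add_mem _
          (Submodule.smul_mem _ _ (Submodule.subset_span ⟨_, rfl⟩))
          (Submodule.smul_mem _ _ (Submodule.subset_span ⟨_, rfl⟩)))
          (Submodule.smul_mem _ _ (Submodule.subset_span ⟨_, rfl⟩)))
          (Submodule.smul_mem _ _ (Submodule.subset_span ⟨_, rfl⟩))

open BinSchurAux in
private def binSchur_equivSigma (m : ℕ) : P m ≃ Σ j : Fin m, Fin j.val where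
  toFun q := ⟨q.1.2, ⟨q.1.1.val, q.2⟩⟩
  invFun s := ⟨(⟨s.2.val, s.2.isLt.trans s.1.isLt⟩, s.1), s.2.isLt⟩
  left_inv q := by ext <;> rfl
  right_inv s := by ext <;> rfl

open BinSchurAux in
private lemma binSchur_cardP (m : ℕ) : Fintype.card (P m) = ∑ j : Fin m, (j : ℕ) := by
  rw [Fintype.card_congr (binSchur_equivSigma m), Fintype.card_sigma]
  simp

open BinSchurAux in
private lemma binSchur_card_eq (r : ℕ) :
    Fintype.card (Option (Fin r ⊕ P r)) = Fintype.card (Option (P (r + 1))) := by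
  simp only [Fintype.card_option, Fintype.card_sum, Fintype.card_fin, binSchur_cardP]
  rw [Fin.sum_univ_castSucc]
  simp
  omega

/-- A binary matrix `Z` is Schur independent iff the sign matrix
`[F(Z), e]` (with `F(z) = 2z - e`) is Schur independent. -/
theorem binSchurIndep_iff_schurIndep_snoc {n r : ℕ} (z : Fin r → Fin n → ℝ)
    (hz : ∀ i k, z i k = 0 ∨ z i k = 1) :
    BinSchurIndep z ↔
      SchurIndep (Fin.snoc (fun i k => 2 * z i k - 1) (fun _ => (1 : ℝ))) := by
  rw [BinSchurIndep, SchurIndep, linearIndependent_iff_card_eq_finrank_span,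
    linearIndependent_iff_card_eq_finrank_span, binSchur_card_eq r, Set.finrank, Set.finrank,
    binSchur_span_eq z]
end

section
/- Let Z ∈ {0,1}^{n×r} be a Schur independent binary matrix and Q ∈ R^{r×r} an invertible matrix. Then ZQ is a binary matrix (all entries in {0,1}) if and only if Q is a permutation matrix. -/
open Matrix

/-- A permutation matrix. -/
def IsPermMatrix {r : ℕ} (Q : Matrix (Fin r) (Fin r) ℝ) : Prop :=
  ∃ π : Equiv.Perm (Fin r), ∀ i j, Q i j = if j = π i then 1 else 0

private lemma sq_sum_aux {r : ℕ} (a : Fin r → ℝ) :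
    (∑ k, a k) * (∑ k, a k)
      = (∑ k, a k * a k) + 2 * ∑ q : {p : Fin r × Fin r // p.1 < p.2}, a q.1.1 * a q.1.2 := by
  have hsub : ∑ q : {p : Fin r × Fin r // p.1 < p.2}, a q.1.1 * a q.1.2
      = ∑ p ∈ Finset.univ.filter (fun p : Fin r × Fin r => p.1 < p.2), a p.1 * a p.2 :=
    (Finset.sum_subtype (p := fun p : Fin r × Fin r => p.1 < p.2)
      (Finset.univ.filter (fun p : Fin r × Fin r => p.1 < p.2))
      (fun x => by simp) (fun p => a p.1 * a p.2)).symm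
  rw [hsub, Finset.sum_mul_sum, ← Finset.sum_product']
  rw [← Finset.univ.diag_union_offDiag,
    Finset.sum_union (Finset.disjoint_diag_offDiag _), Finset.sum_diag]
  congr 1
  have hdecomp : (Finset.univ : Finset (Fin r)).offDiag
      = Finset.univ.filter (fun p : Fin r × Fin r => p.1 < p.2)
        ∪ Finset.univ.filter (fun p : Fin r × Fin r => p.2 < p.1) := by
    ext p
    simp only [Finset.mem_offDiag, Finset.mem_union, Finset.mem_filter, Finset.mem_univ,
      true_and]
    exact ⟨fun h => lt_or_gt_of_ne h, fun h => h.elim ne_of_lt ne_of_gt⟩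
  have hdisj : Disjoint (Finset.univ.filter (fun p : Fin r × Fin r => p.1 < p.2))
      (Finset.univ.filter (fun p : Fin r × Fin r => p.2 < p.1)) := by
    rw [Finset.disjoint_left]
    intro p hp hp'
    simp only [Finset.mem_filter] at hp hp'
    exact absurd hp'.2 (not_lt_of_gt hp.2)
  have hswap : ∑ p ∈ Finset.univ.filter (fun p : Fin r × Fin r => p.2 < p.1), a p.1 * a p.2
      = ∑ p ∈ Finset.univ.filter (fun p : Fin r × Fin r => p.1 < p.2), a p.1 * a p.2 := by
    apply Finset.sum_nbij' (fun p => Prod.swap p) (fun p => Prod.swap p) <;>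
      simp [mul_comm]
  rw [hdecomp, Finset.sum_union hdisj, hswap]
  ring

/-- For a Schur independent binary matrix `Z` and invertible `Q`,
`ZQ` is a binary matrix iff `Q` is a permutation matrix. -/
theorem binaryMatrix_mul_iff_perm {n r : ℕ} (Z : Matrix (Fin n) (Fin r) ℝ)
    (hZ : ∀ i j, Z i j = 0 ∨ Z i j = 1)
    (hSchur : BinSchurIndep (fun j i => Z i j))
    (Q : Matrix (Fin r) (Fin r) ℝ) (hQ : IsUnit Q) :
    (∀ i j, (Z * Q) i j = 0 ∨ (Z * Q) i j = 1) ↔ IsPermMatrix Q := by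
  have hdet : IsUnit Q.det := (Matrix.isUnit_iff_isUnit_det Q).mp hQ
  have hinv : Q⁻¹ * Q = 1 := Matrix.nonsing_inv_mul Q hdet
  constructor
  · intro hbin
    -- Step 1: extract coefficient conditions from Schur independence
    have main : ∀ j : Fin r,
        (∀ k, Q k j * Q k j - Q k j = 0) ∧
        (∀ k l : Fin r, k < l → 2 * (Q k j * Q l j) = 0) := by
      intro j
      set g : Option (Fin r ⊕ {p : Fin r × Fin r // p.1 < p.2}) → ℝ :=
        fun p => p.elim 0 (Sum.elim (fun k => Q k j * Q k j - Q k j)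
          (fun q => 2 * (Q q.1.1 j * Q q.1.2 j))) with hg
      have hzero : ∀ p, g p = 0 := by
        apply Fintype.linearIndependent_iff.mp hSchur
        funext i
        simp only [Finset.sum_apply, Pi.smul_apply, smul_eq_mul, Pi.zero_apply]
        rw [Fintype.sum_option, Fintype.sum_sum_type]
        have hself : ∀ k, Z i k * Z i k = Z i k := by
          intro k; rcases hZ i k with h | h <;> rw [h] <;> ring
        have key : (∑ k, (Q k j * Z i k)) * (∑ k, (Q k j * Z i k))
            = (∑ k, (Q k j * Z i k) * (Q k j * Z i k))
              + 2 * ∑ q : {p : Fin r × Fin r // p.1 < p.2},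
                  (Q q.1.1 j * Z i q.1.1) * (Q q.1.2 j * Z i q.1.2) :=
          sq_sum_aux _
        have hw : (Z * Q) i j = ∑ k, Q k j * Z i k := by
          rw [Matrix.mul_apply]; exact Finset.sum_congr rfl (fun k _ => mul_comm _ _)
        have hwbin : (Z * Q) i j * (Z * Q) i j - (Z * Q) i j = 0 := by
          rcases hbin i j with h | h <;> rw [h] <;> ring
        rw [hw] at hwbin
        calc g none * 1 + ((∑ k, g (some (Sum.inl k)) * Z i k)
              + ∑ q : {p : Fin r × Fin r // p.1 < p.2},
                  g (some (Sum.inr q)) * (Z i q.1.1 * Z i q.1.2))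
            = (∑ k, (Q k j * Z i k) * (Q k j * Z i k))
              + 2 * (∑ q : {p : Fin r × Fin r // p.1 < p.2},
                  (Q q.1.1 j * Z i q.1.1) * (Q q.1.2 j * Z i q.1.2))
              - ∑ k, Q k j * Z i k := by
              simp only [hg, Option.elim, Sum.elim_inl, Sum.elim_inr]
              have h1 : ∀ k, (Q k j * Q k j - Q k j) * Z i k
                  = (Q k j * Z i k) * (Q k j * Z i k) - Q k j * Z i k := by
                intro k
                nlinarith [hself k]
              have h2 : ∀ q : {p : Fin r × Fin r // p.1 < p.2},
                  2 * (Q q.1.1 j * Q q.1.2 j) * (Z i q.1.1 * Z i q.1.2)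
                  = 2 * ((Q q.1.1 j * Z i q.1.1) * (Q q.1.2 j * Z i q.1.2)) := by
                intro q; ring
              rw [Finset.mul_sum]
              simp only [h1, h2]
              rw [Finset.sum_sub_distrib]
              ring
          _ = 0 := by rw [← key]; linarith [hwbin]
      constructor
      · intro k; exact hzero (some (Sum.inl k))
      · intro k l hkl; exact hzero (some (Sum.inr ⟨(k, l), hkl⟩))
    -- Step 2: entries of Q are 0/1, at most one 1 per column
    have h01 : ∀ k j, Q k j = 0 ∨ Q k j = 1 := by
      intro k j
      have h := (main j).1 k
      have : Q k j * (Q k j - 1) = 0 := by ring_nf; linarith [h]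
      rcases mul_eq_zero.mp this with h | h
      · exact Or.inl h
      · exact Or.inr (by linarith)
    have hprod : ∀ j k l, k ≠ l → Q k j * Q l j = 0 := by
      intro j k l hkl
      rcases lt_or_gt_of_ne hkl with h | h
      · have := (main j).2 k l h; linarith
      · have := (main j).2 l k h; nlinarith
    -- Step 3: each column has a 1
    have hex : ∀ j, ∃ k, Q k j = 1 := by
      intro j
      by_contra hcon
      push_neg at hcon
      have hzero : ∀ k, Q k j = 0 := by
        intro k; rcases h01 k j with h | h
        · exact h
        · exact absurd h (hcon k)
      have : (Q⁻¹ * Q) j j = 0 := by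
        rw [Matrix.mul_apply]
        apply Finset.sum_eq_zero
        intro m _; rw [hzero m, mul_zero]
      rw [hinv, Matrix.one_apply_eq] at this
      norm_num at this
    choose σ hσ using hex
    have hcol : ∀ k j, Q k j = if k = σ j then 1 else 0 := by
      intro k j
      by_cases h : k = σ j
      · rw [if_pos h, h]; exact hσ j
      · rw [if_neg h]
        have := hprod j k (σ j) h
        rw [hσ j, mul_one] at this
        exact this
    -- Step 4: σ is injective
    have hQinv : ∀ a j : Fin r, Q⁻¹ a (σ j) = (1 : Matrix (Fin r) (Fin r) ℝ) a j := by
      intro a j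
      have : (Q⁻¹ * Q) a j = Q⁻¹ a (σ j) := by
        rw [Matrix.mul_apply]
        rw [Finset.sum_eq_single (σ j)]
        · rw [hσ j, mul_one]
        · intro m _ hm
          rw [hcol m j, if_neg hm, mul_zero]
        · intro h; exact absurd (Finset.mem_univ _) h
      rw [← this, hinv]
    have hinj : Function.Injective σ := by
      intro j j' h
      have h1 : (1 : Matrix (Fin r) (Fin r) ℝ) j j' = (1 : Matrix (Fin r) (Fin r) ℝ) j j := by
        rw [← hQinv j j', ← hQinv j j, h]
      rw [Matrix.one_apply_eq] at h1
      by_contra hne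
      rw [Matrix.one_apply_ne (Ne.symm (fun h' => hne h'.symm))] at h1
      norm_num at h1
    have hbij : Function.Bijective σ := (Finite.injective_iff_bijective).mp hinj
    let e := Equiv.ofBijective σ hbij
    refine ⟨e.symm, fun i j => ?_⟩
    rw [hcol i j]
    by_cases h : i = σ j
    · rw [if_pos h, if_pos]
      rw [h]
      exact (e.symm_apply_apply j).symm
    · rw [if_neg h, if_neg]
      intro hj
      apply h
      rw [hj]
      exact (e.apply_symm_apply i).symm
  · rintro ⟨π, hπ⟩ i j
    rw [Matrix.mul_apply]
    have : ∀ k, Z i k * Q k j = if k = π.symm j then Z i k else 0 := by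
      intro k
      rw [hπ k j]
      by_cases h : k = π.symm j
      · rw [if_pos h, if_pos, mul_one]
        rw [h, Equiv.apply_symm_apply]
      · rw [if_neg h, if_neg, mul_zero]
        intro hj
        exact h (by rw [hj, Equiv.symm_apply_apply])
    simp only [this, Finset.sum_ite_eq' Finset.univ, Finset.mem_univ, if_true]
    exact hZ i (π.symm j)
end

section
/- Let C = Z Wᵀ with Z ∈ {0,1}^{n×r} Schur independent and W ∈ R^{m×r} of full column rank. If C = Z̃ W̃ᵀ is another decomposition with Z̃ ∈ {0,1}^{n×r} and W̃ ∈ R^{m×r}, then there is a permutation matrix Π with Z̃ = Z Π and W̃ = W Π. -/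
open Matrix

lemma auxIsUnit_of_rank_eq {r : ℕ} (B : Matrix (Fin r) (Fin r) ℝ) (h : B.rank = r) :
    IsUnit B := by
  rw [← Matrix.mulVec_surjective_iff_isUnit]
  have hr : LinearMap.range B.mulVecLin = ⊤ := by
    apply Submodule.eq_top_of_finrank_eq
    rw [show Module.finrank ℝ (LinearMap.range B.mulVecLin) = B.rank from rfl, h]
    simp [Module.finrank_fintype_fun_eq_card]
  intro y
  have : y ∈ LinearMap.range B.mulVecLin := by rw [hr]; trivial
  obtain ⟨x, hx⟩ := this
  exact ⟨x, hx⟩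

lemma auxInj {a b : ℕ} (M : Matrix (Fin a) (Fin b) ℝ)
    (h : ∀ v, M *ᵥ v = 0 → v = 0) : Function.Injective M.mulVec := by
  have hk : LinearMap.ker M.mulVecLin = ⊥ := LinearMap.ker_eq_bot'.mpr fun v hv => h v hv
  exact LinearMap.ker_eq_bot.mp hk

lemma auxIsUnit_tmul {n r : ℕ} (M : Matrix (Fin n) (Fin r) ℝ)
    (h : Function.Injective M.mulVec) : IsUnit (Mᵀ * M) := by
  rw [← Matrix.mulVec_injective_iff_isUnit]
  apply auxInj
  intro v hv
  have hk : v ∈ LinearMap.ker (Mᵀ * M).mulVecLin := hv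
  rw [Matrix.ker_mulVecLin_transpose_mul_self] at hk
  have hMv : M *ᵥ v = 0 := hk
  exact h (a₂ := 0) (by rw [hMv, Matrix.mulVec_zero])

lemma auxLeftInv {n r : ℕ} (M : Matrix (Fin n) (Fin r) ℝ) (h : IsUnit (Mᵀ * M)) :
    ((Mᵀ * M)⁻¹ * Mᵀ) * M = 1 := by
  rw [Matrix.mul_assoc, Matrix.nonsing_inv_mul _ ((Matrix.isUnit_iff_isUnit_det _).mp h)]

lemma auxSqSum {r : ℕ} (g : Fin r → ℝ) :
    (∑ j, g j)^2 = (∑ j, (g j)^2)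
      + 2 * ∑ p ∈ Finset.univ.filter (fun p : Fin r × Fin r => p.1 < p.2), g p.1 * g p.2 := by
  have h1 : (∑ j, g j)^2 = ∑ p : Fin r × Fin r, g p.1 * g p.2 := by
    rw [sq, Finset.sum_mul_sum, ← Finset.univ_product_univ, Finset.sum_product]
  rw [h1]
  rw [← Finset.sum_filter_add_sum_filter_not Finset.univ (fun p : Fin r × Fin r => p.1 = p.2)]
  have hdiag : ∑ p ∈ Finset.univ.filter (fun p : Fin r × Fin r => p.1 = p.2), g p.1 * g p.2
      = ∑ j, (g j)^2 := by
    refine Finset.sum_nbij' (fun p => p.1) (fun j => (j, j)) ?_ ?_ ?_ ?_ ?_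
    · intro p hp; simp
    · intro j hj; simp
    · intro p hp; simp at hp; ext <;> simp [hp]
    · intro j hj; simp
    · intro p hp; simp at hp; rw [← hp]; ring
  have hoff : ∑ p ∈ Finset.univ.filter (fun p : Fin r × Fin r => ¬ p.1 = p.2), g p.1 * g p.2
      = 2 * ∑ p ∈ Finset.univ.filter (fun p : Fin r × Fin r => p.1 < p.2), g p.1 * g p.2 := by
    rw [← Finset.sum_filter_add_sum_filter_not
      (Finset.univ.filter (fun p : Fin r × Fin r => ¬ p.1 = p.2))
      (fun p : Fin r × Fin r => p.1 < p.2), Finset.filter_filter, Finset.filter_filter]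
    have e1 : Finset.univ.filter (fun p : Fin r × Fin r => ¬ p.1 = p.2 ∧ p.1 < p.2)
        = Finset.univ.filter (fun p : Fin r × Fin r => p.1 < p.2) := by
      apply Finset.filter_congr; intro p _
      simp only [and_iff_right_iff_imp]
      exact fun h => ne_of_lt h
    have e2 : ∑ p ∈ Finset.univ.filter (fun p : Fin r × Fin r => ¬ p.1 = p.2 ∧ ¬ p.1 < p.2),
          g p.1 * g p.2
        = ∑ p ∈ Finset.univ.filter (fun p : Fin r × Fin r => p.1 < p.2), g p.1 * g p.2 := by
      refine Finset.sum_nbij' (fun p => p.swap) (fun p => p.swap) ?_ ?_ ?_ ?_ ?_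
      · intro p hp; simp at hp ⊢
        exact lt_of_le_of_ne hp.2 (Ne.symm hp.1)
      · intro p hp; simp at hp ⊢
        exact ⟨Ne.symm (ne_of_lt hp), le_of_lt hp⟩
      · intro p hp; simp
      · intro p hp; simp
      · intro p hp; simp [mul_comm]
    rw [e1, e2]
    ring
  rw [hdiag, hoff]

lemma auxSchur {n r : ℕ} (Z : Matrix (Fin n) (Fin r) ℝ) (A : Matrix (Fin r) (Fin r) ℝ)
    (hZ : ∀ i j, Z i j = 0 ∨ Z i j = 1)
    (hSchur : BinSchurIndep (fun j i => Z i j))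
    (hZA : ∀ i k', (Z * A) i k' = 0 ∨ (Z * A) i k' = 1) (k : Fin r) :
    (∀ j, A j k * A j k = A j k) ∧
      (∀ q : {p : Fin r × Fin r // p.1 < p.2}, A q.1.1 k * A q.1.2 k = 0) := by
  classical
  set c : Option (Fin r ⊕ {p : Fin r × Fin r // p.1 < p.2}) → ℝ :=
    fun p => p.elim 0 (Sum.elim (fun j => A j k * A j k - A j k)
      (fun q => 2 * (A q.1.1 k * A q.1.2 k))) with hc
  have hEq : ∑ p, c p • (fun p : Option (Fin r ⊕ {p : Fin r × Fin r // p.1 < p.2}) =>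
      p.elim (fun _ => (1 : ℝ)) (Sum.elim (fun j i => Z i j)
        (fun q => (fun i => Z i q.1.1) * (fun i => Z i q.1.2)))) p = 0 := by
    funext i
    have expand : (∑ p, c p • (fun p : Option (Fin r ⊕ {p : Fin r × Fin r // p.1 < p.2}) =>
        p.elim (fun _ => (1 : ℝ)) (Sum.elim (fun j i => Z i j)
          (fun q => (fun i => Z i q.1.1) * (fun i => Z i q.1.2)))) p) i
        = ∑ j, (A j k * A j k - A j k) * Z i j
          + ∑ q : {p : Fin r × Fin r // p.1 < p.2},
              (2 * (A q.1.1 k * A q.1.2 k)) * (Z i q.1.1 * Z i q.1.2) := by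
      rw [Finset.sum_apply]
      rw [Fintype.sum_option]
      simp only [hc, Option.elim, Pi.smul_apply, smul_eq_mul, Pi.mul_apply]
      rw [Fintype.sum_sum_type]
      simp only [Sum.elim_inl, Sum.elim_inr, Pi.mul_apply]
      ring
    rw [Pi.zero_apply, expand]
    set g : Fin r → ℝ := fun j => Z i j * A j k with hg
    have hsub : ∑ q : {p : Fin r × Fin r // p.1 < p.2},
        (2 * (A q.1.1 k * A q.1.2 k)) * (Z i q.1.1 * Z i q.1.2)
        = ∑ p ∈ Finset.univ.filter (fun p : Fin r × Fin r => p.1 < p.2),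
            2 * (g p.1 * g p.2) := by
      rw [Finset.sum_subtype (Finset.univ.filter (fun p : Fin r × Fin r => p.1 < p.2))
        (p := fun p : Fin r × Fin r => p.1 < p.2) (by intro x; simp)
        (fun p => 2 * (g p.1 * g p.2))]
      apply Finset.sum_congr rfl
      intro q _
      simp only [hg]
      ring
    rw [hsub]
    have hterm : ∀ j, (A j k * A j k - A j k) * Z i j = g j ^ 2 - g j := by
      intro j
      rcases hZ i j with h | h <;> simp [hg, h] <;> ring
    rw [Finset.sum_congr rfl (fun j _ => hterm j), Finset.sum_sub_distrib,
      ← Finset.mul_sum]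
    have hs : ∑ j, g j = (Z * A) i k := by
      rw [Matrix.mul_apply]
    have hss : (∑ j, g j) ^ 2 = ∑ j, g j := by
      rcases hZA i k with h | h <;> rw [hs, h] <;> norm_num
    have := auxSqSum g
    linarith
  have hall := (Fintype.linearIndependent_iff.mp hSchur) c hEq
  constructor
  · intro j
    have := hall (some (Sum.inl j))
    simp only [hc, Option.elim, Sum.elim_inl] at this
    linarith [this]
  · intro q
    have := hall (some (Sum.inr q))
    simp only [hc, Option.elim, Sum.elim_inr] at this
    linarith [this]

/-- Uniqueness, up to permutation, of a minimal binary component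
decomposition with Schur independent binary component and full-column-rank weights. -/
theorem binary_component_decomposition_uniqueness {n m r : ℕ}
    (Z Z' : Matrix (Fin n) (Fin r) ℝ) (W W' : Matrix (Fin m) (Fin r) ℝ)
    (hZ : ∀ i j, Z i j = 0 ∨ Z i j = 1)
    (hSchur : BinSchurIndep (fun j i => Z i j))
    (hW : W.rank = r)
    (hZ' : ∀ i j, Z' i j = 0 ∨ Z' i j = 1)
    (hC : Z * Wᵀ = Z' * W'ᵀ) :
    ∃ P : Matrix (Fin r) (Fin r) ℝ, IsPermMatrix P ∧ Z' = Z * P ∧ W' = W * P := by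
  classical
  -- columns of Z are linearly independent, so Z has a left inverse
  have hzcols : LinearIndependent ℝ (fun j : Fin r => (fun i => Z i j : Fin n → ℝ)) := by
    have h := hSchur.comp (fun j : Fin r => (some (Sum.inl j) :
      Option (Fin r ⊕ {p : Fin r × Fin r // p.1 < p.2})))
      (fun a b h => by simpa using h)
    exact h
  have hZinj : Function.Injective Z.mulVec := by
    rw [Matrix.mulVec_injective_iff]; exact hzcols
  have hUZ : IsUnit (Zᵀ * Z) := auxIsUnit_tmul Z hZinj
  have hHZ : ((Zᵀ * Z)⁻¹ * Zᵀ) * Z = 1 := auxLeftInv Z hUZ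
  have hrankZ : Z.rank = r := by
    rw [← Matrix.rank_transpose_mul_self, Matrix.rank_of_isUnit _ hUZ, Fintype.card_fin]
  -- W has a left inverse G
  have hUW : IsUnit (Wᵀ * W) := by
    apply auxIsUnit_of_rank_eq
    rw [Matrix.rank_transpose_mul_self, hW]
  set G := (Wᵀ * W)⁻¹ * Wᵀ with hGdef
  have hGW : G * W = 1 := auxLeftInv W hUW
  -- Z = (Z * Wᵀ) * Gᵀ, hence rank (Z*Wᵀ) ≥ r and rank W' = r
  have hZC : Z = (Z * Wᵀ) * Gᵀ := by
    rw [Matrix.mul_assoc, ← Matrix.transpose_mul, hGW, Matrix.transpose_one, Matrix.mul_one]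
  have hrankW' : W'.rank = r := by
    refine le_antisymm (W'.rank_le_card_width.trans_eq (Fintype.card_fin r)) ?_
    calc r = Z.rank := hrankZ.symm
    _ = ((Z * Wᵀ) * Gᵀ).rank := by rw [← hZC]
    _ ≤ (Z * Wᵀ).rank := Matrix.rank_mul_le_left _ _
    _ = (Z' * W'ᵀ).rank := by rw [hC]
    _ ≤ (W'ᵀ).rank := Matrix.rank_mul_le_right _ _
    _ = W'.rank := Matrix.rank_transpose _
  have hUW' : IsUnit (W'ᵀ * W') := by
    apply auxIsUnit_of_rank_eq
    rw [Matrix.rank_transpose_mul_self, hrankW']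
  set G' := (W'ᵀ * W')⁻¹ * W'ᵀ with hG'def
  have hG'W' : G' * W' = 1 := auxLeftInv W' hUW'
  set A := Wᵀ * G'ᵀ with hAdef
  have hZ'A : Z' = Z * A := by
    calc Z' = Z' * (W'ᵀ * G'ᵀ) := by
          rw [← Matrix.transpose_mul, hG'W', Matrix.transpose_one, Matrix.mul_one]
    _ = (Z' * W'ᵀ) * G'ᵀ := by rw [Matrix.mul_assoc]
    _ = (Z * Wᵀ) * G'ᵀ := by rw [hC]
    _ = Z * A := by rw [Matrix.mul_assoc]
  -- Wᵀ = A * W'ᵀ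
  have hWA : Wᵀ = A * W'ᵀ := by
    have h1 : Zᵀ * (Z * Wᵀ) = Zᵀ * (Z * (A * W'ᵀ)) := by
      rw [hC, hZ'A, Matrix.mul_assoc]
    have h2 : (Zᵀ * Z) * Wᵀ = (Zᵀ * Z) * (A * W'ᵀ) := by
      rw [Matrix.mul_assoc, Matrix.mul_assoc]; exact h1
    have h3 := congrArg (fun M => (Zᵀ * Z)⁻¹ * M) h2
    simpa [← Matrix.mul_assoc, hHZ, Matrix.one_mul] using h3
  -- the Schur argument: entries of A
  have hA := auxSchur Z A hZ hSchur (by rw [← hZ'A]; exact hZ')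
  -- A is invertible
  have hUA : IsUnit A := by
    apply auxIsUnit_of_rank_eq
    refine le_antisymm (A.rank_le_card_width.trans_eq (Fintype.card_fin r)) ?_
    calc r = W.rank := hW.symm
    _ = Wᵀ.rank := (Matrix.rank_transpose _).symm
    _ = (A * W'ᵀ).rank := by rw [← hWA]
    _ ≤ A.rank := Matrix.rank_mul_le_left _ _
  have hAinj : Function.Injective A.mulVec := Matrix.mulVec_injective_iff_isUnit.mpr hUA
  -- each column of A has a unique 1
  have hcolA : ∀ i j, (A.mulVec (Pi.single j 1)) i = A i j := by
    intro i j
    simp [Matrix.mulVec_single]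
  have hexist : ∀ k : Fin r, ∃ j, A j k ≠ 0 := by
    intro k
    by_contra hcon
    push_neg at hcon
    have : A.mulVec (Pi.single k 1) = A.mulVec 0 := by
      rw [Matrix.mulVec_zero]
      funext i; rw [hcolA i k]; exact hcon i
    have := hAinj this
    have := congrFun this k
    simp at this
  have hcross : ∀ k i j, i ≠ j → A i k * A j k = 0 := by
    intro k i j hij
    rcases lt_or_gt_of_ne hij with h | h
    · exact (hA k).2 ⟨(i, j), h⟩
    · have := (hA k).2 ⟨(j, i), h⟩
      linarith [this]
  choose σ hσ using hexist
  have hAone : ∀ k, A (σ k) k = 1 := by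
    intro k
    have h1 := (hA k).1 (σ k)
    have h2 : A (σ k) k * (A (σ k) k - 1) = 0 := by ring_nf; linarith [h1]
    rcases mul_eq_zero.mp h2 with h | h
    · exact absurd h (hσ k)
    · linarith
  have hAzero : ∀ k j, j ≠ σ k → A j k = 0 := by
    intro k j hj
    have := hcross k j (σ k) hj
    rw [hAone k, mul_one] at this
    exact this
  have hAval : ∀ i j, A i j = if i = σ j then 1 else 0 := by
    intro i j
    by_cases h : i = σ j
    · rw [h, hAone]; simp [h]
    · rw [hAzero j i h]; simp [h]
  -- σ is injective hence bijective
  have hσinj : Function.Injective σ := by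
    intro k k' hkk'
    by_contra hne
    have hcols : A.mulVec (Pi.single k 1) = A.mulVec (Pi.single k' 1) := by
      funext i
      rw [hcolA, hcolA, hAval, hAval, hkk']
    have := congrFun (hAinj hcols) k
    simp [Pi.single_apply, hne] at this
  have hσbij : Function.Bijective σ := (Finite.injective_iff_bijective).mp hσinj
  let e : Equiv.Perm (Fin r) := Equiv.ofBijective σ hσbij
  have hperm : IsPermMatrix A := by
    refine ⟨e.symm, fun i j => ?_⟩
    rw [hAval]
    congr 1
    simp only [eq_iff_iff]
    constructor
    · intro h; rw [h]; exact (e.symm_apply_apply j).symm ▸ rfl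
    · intro h; rw [h]; exact (e.apply_symm_apply i).symm
  -- Aᵀ * A = 1
  have hAtA : Aᵀ * A = 1 := by
    ext a b
    rw [Matrix.mul_apply, Matrix.one_apply]
    have : ∀ i, Aᵀ a i * A i b = (if i = σ a then 1 else 0) * (if i = σ b then 1 else 0) := by
      intro i
      rw [Matrix.transpose_apply, hAval, hAval]
    rw [Finset.sum_congr rfl (fun i _ => this i)]
    by_cases hab : a = b
    · subst hab
      simp [Finset.sum_ite_eq']
    · have hne : σ a ≠ σ b := fun h => hab (hσinj h)
      rw [Finset.sum_eq_zero]
      · simp [hab]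
      · intro i _
        by_cases h1 : i = σ a
        · simp [h1, hne]
        · simp [h1]
  have hW'A : W' = W * A := by
    have h1 : W'ᵀ = Aᵀ * Wᵀ := by
      rw [hWA, ← Matrix.mul_assoc, hAtA, Matrix.one_mul]
    have : W'ᵀ = (W * A)ᵀ := by rw [Matrix.transpose_mul]; exact h1
    calc W' = W'ᵀᵀ := (Matrix.transpose_transpose _).symm
    _ = (W * A)ᵀᵀ := by rw [this]
    _ = W * A := Matrix.transpose_transpose _
  exact ⟨A, hperm, hZ'A, hW'A⟩
end

section
/- Any sign matrix S ∈ {±1}^{n×r} with permeance ν(S) = λ_min(SᵀS)/n > 0 satisfies μ_(l)(S) ≤ ν(S)⁻¹, where μ_(l)(S) = (n/r) max_{1≤k≤n} ‖P e_k‖² and P is the orthogonal projector onto range(S). -/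
open Matrix

/-- A sign matrix `S ∈ {±1}^{n×r}` with permeance
`ν(S) = λ_min(SᵀS)/n > 0` satisfies `μ_(l)(S) ≤ ν(S)⁻¹`, where
`μ_(l)(S) = (n/r) max_k ‖P e_k‖²` and `P` is the orthogonal projector onto
`range S`.  The permeance is encoded variationally: `n ν ≤ ‖S u‖² / ‖u‖²` for
all `u`, with equality attained at some `u ≠ 0`. -/
theorem left_incoherence_le_inv_permeance {n r : ℕ}
    (S : Matrix (Fin n) (Fin r) ℝ) (hS : ∀ i j, S i j = 1 ∨ S i j = -1)
    (ν : ℝ) (hν0 : 0 < ν)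
    (hν_lb : ∀ u : Fin r → ℝ, (n : ℝ) * ν * (∑ i, u i ^ 2) ≤ ∑ k, (S.mulVec u) k ^ 2)
    (hν_att : ∃ u : Fin r → ℝ, u ≠ 0 ∧
      (n : ℝ) * ν * (∑ i, u i ^ 2) = ∑ k, (S.mulVec u) k ^ 2)
    (P : Matrix (Fin n) (Fin n) ℝ) (hPsymm : P.IsSymm) (hPidem : P * P = P)
    (hPrange : ∀ v : Fin n → ℝ, P.mulVec v = v ↔ ∃ c : Fin r → ℝ, S.mulVec c = v) :
    ∀ k : Fin n, (n : ℝ) / r * (∑ i, (P.mulVec (Pi.single k 1)) i ^ 2) ≤ ν⁻¹ := by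
  intro k
  have hn : 0 < n := k.pos
  rcases Nat.eq_zero_or_pos r with hr | hr
  · obtain ⟨u, hu, -⟩ := hν_att
    subst hr
    exact absurd (Subsingleton.elim u 0) hu
  have hrpos : (0:ℝ) < r := by exact_mod_cast hr
  set w : Fin n → ℝ := P.mulVec (Pi.single k 1) with hw
  -- w is in the range of S
  obtain ⟨c, hc⟩ := (hPrange w).1 (by rw [hw, Matrix.mulVec_mulVec, hPidem])
  set A : ℝ := ∑ i, w i ^ 2 with hA
  have hA0 : 0 ≤ A := Finset.sum_nonneg fun i _ => sq_nonneg _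
  -- columns of S are fixed by P
  have hcol : ∀ j : Fin r, P.mulVec (fun i => S i j) = fun i => S i j := by
    intro j
    exact (hPrange _).2 ⟨Pi.single j 1, by
      funext i; simp [Matrix.mulVec, dotProduct, Pi.single_apply, mul_ite]⟩
  -- ∑ i, S i j * w i = S k j
  have hStw : ∀ j : Fin r, ∑ i, S i j * w i = S k j := by
    intro j
    have h1 : (fun i => S i j) ⬝ᵥ w = (P.vecMul (fun i => S i j)) ⬝ᵥ (Pi.single k 1) := by
      rw [hw, Matrix.dotProduct_mulVec]
    have h2 : P.vecMul (fun i => S i j) = fun i => S i j := by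
      rw [← Matrix.mulVec_transpose, hPsymm.eq]
      exact hcol j
    calc ∑ i, S i j * w i = (fun i => S i j) ⬝ᵥ w := rfl
      _ = (fun i => S i j) ⬝ᵥ (Pi.single k 1) := by rw [h1, h2]
      _ = S k j := by simp [dotProduct, Pi.single_apply, mul_ite]
  -- A = ∑ j, c j * S k j
  have hAeq : A = ∑ j, c j * S k j := by
    calc A = ∑ i, (S.mulVec c) i * w i := by
            rw [hA]
            refine Finset.sum_congr rfl fun i _ => ?_
            rw [hc]; ring
      _ = ∑ i, ∑ j, S i j * c j * w i := by
            refine Finset.sum_congr rfl fun i _ => ?_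
            rw [Matrix.mulVec, dotProduct, Finset.sum_mul]
      _ = ∑ j, ∑ i, S i j * c j * w i := Finset.sum_comm
      _ = ∑ j, c j * ∑ i, S i j * w i := by
            refine Finset.sum_congr rfl fun j _ => ?_
            rw [Finset.mul_sum]
            refine Finset.sum_congr rfl fun i _ => by ring
      _ = ∑ j, c j * S k j := by
            refine Finset.sum_congr rfl fun j _ => by rw [hStw j]
  -- Cauchy–Schwarz
  have hcs : A ^ 2 ≤ (∑ j, c j ^ 2) * (∑ j, (S k j) ^ 2) := by
    rw [hAeq]
    exact Finset.sum_mul_sq_le_sq_mul_sq Finset.univ c (fun j => S k j)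
  have hSk : (∑ j, (S k j) ^ 2) = (r : ℝ) := by
    have : ∀ j : Fin r, (S k j) ^ 2 = 1 := fun j => by
      rcases hS k j with h | h <;> rw [h] <;> norm_num
    simp [this]
  have hlb : (n : ℝ) * ν * (∑ j, c j ^ 2) ≤ A := by
    have := hν_lb c
    rwa [hc] at this
  have hc0 : 0 ≤ ∑ j, c j ^ 2 := Finset.sum_nonneg fun j _ => sq_nonneg _
  rw [hSk] at hcs
  have hnpos : (0:ℝ) < n := by exact_mod_cast hn
  -- key inequality: n ν A ≤ r
  have key : (n : ℝ) * ν * A ≤ r := by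
    rcases eq_or_lt_of_le hA0 with h | h
    · rw [← h, mul_zero]; positivity
    · nlinarith [mul_le_mul_of_nonneg_left hcs (by positivity : (0:ℝ) ≤ (n:ℝ) * ν),
        mul_le_mul_of_nonneg_right hlb hrpos.le]
  rw [div_mul_eq_mul_div, div_le_iff₀ hrpos, inv_mul_eq_div, le_div_iff₀ hν0]
  nlinarith [key]
end
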